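/- With the 1D discrete weak derivative d_w as above with r ≥ 0: if w = (w₀, α, β) with w₀ ∈ P_k([0,1]), α = w₀(0), β = w₀(1), k ≤ r+1, and d_w w = 0, then w₀ is constant on [0,1]. -/

import Mathlib

open MeasureTheory intervalIntegral Polynomial

theorem discrete_weak_derivative_kernel_constant
    (r k : ℕ) (hrk : k ≤ r + 1) (w₀ : Polynomial ℝ) (hw : w₀.natDegree ≤ k)
    (hzero : ∀ φ : Polynomial ℝ, φ.natDegree ≤ r →
      (0 : ℝ) =
        -(∫ x in (0:ℝ)..1, w₀.eval x * (derivative φ).eval x)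
          + w₀.eval 1 * φ.eval 1 - w₀.eval 0 * φ.eval 0) :
    ∃ cst : ℝ, w₀ = Polynomial.C cst := by
  set p : Polynomial ℝ := derivative w₀ with hp
  have hpdeg : p.natDegree ≤ r := by
    rw [hp]
    have h1 := Polynomial.natDegree_derivative_le w₀
    omega
  have key := hzero p hpdeg
  -- FTC for the polynomial w₀ * p
  have hftc : (∫ x in (0:ℝ)..1, ((derivative (w₀ * p)).eval x))
      = (w₀ * p).eval 1 - (w₀ * p).eval 0 := by
    apply intervalIntegral.integral_eq_sub_of_hasDerivAt
      (f := fun x => (w₀ * p).eval x) (f' := fun x => (derivative (w₀ * p)).eval x)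
    · intro x _
      exact (w₀ * p).hasDerivAt x
    · exact ((derivative (w₀ * p)).continuous).intervalIntegrable 0 1
  have hderiv : derivative (w₀ * p) = p * p + w₀ * derivative p := by
    rw [Polynomial.derivative_mul, ← hp]
  have hsplit : (∫ x in (0:ℝ)..1, ((derivative (w₀ * p)).eval x))
      = (∫ x in (0:ℝ)..1, p.eval x * p.eval x)
        + (∫ x in (0:ℝ)..1, w₀.eval x * (derivative p).eval x) := by
    rw [hderiv]
    have := intervalIntegral.integral_add
      (f := fun x => p.eval x * p.eval x)
      (g := fun x => w₀.eval x * (derivative p).eval x)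
      (μ := volume) (a := (0:ℝ)) (b := 1)
      ((p.continuous.mul p.continuous).intervalIntegrable 0 1)
      ((w₀.continuous.mul (derivative p).continuous).intervalIntegrable 0 1)
    simpa using this
  have hint0 : (∫ x in (0:ℝ)..1, p.eval x * p.eval x) = 0 := by
    have h1 : (∫ x in (0:ℝ)..1, p.eval x * p.eval x)
        + (∫ x in (0:ℝ)..1, w₀.eval x * (derivative p).eval x)
        = (w₀ * p).eval 1 - (w₀ * p).eval 0 := by rw [← hsplit, hftc]
    simp only [Polynomial.eval_mul] at h1
    linarith [key, h1]
  -- deduce p = 0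
  have hp0 : p = 0 := by
    have hIoc : (∫ x in Set.Ioc (0:ℝ) 1, p.eval x * p.eval x) = 0 := by
      rw [← intervalIntegral.integral_of_le (by norm_num : (0:ℝ) ≤ 1)]
      exact hint0
    have hcont : Continuous fun x : ℝ => p.eval x * p.eval x :=
      p.continuous.mul p.continuous
    have hInt : IntegrableOn (fun x : ℝ => p.eval x * p.eval x) (Set.Ioc (0:ℝ) 1) volume :=
      (hcont.integrableOn_Ioc)
    have hnonneg : 0 ≤ᵐ[volume.restrict (Set.Ioc (0:ℝ) 1)]
        fun x : ℝ => p.eval x * p.eval x :=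
      Filter.Eventually.of_forall fun x => mul_self_nonneg _
    have hae : (fun x : ℝ => p.eval x * p.eval x)
        =ᵐ[volume.restrict (Set.Ioc (0:ℝ) 1)] 0 :=
      (MeasureTheory.integral_eq_zero_iff_of_nonneg_ae hnonneg hInt).mp hIoc
    -- the set of roots in Ioc 0 1 is infinite
    by_contra hne
    have hfin : {x : ℝ | p.eval x = 0}.Finite := by
      apply Set.Finite.subset (p.roots.toFinset : Finset ℝ).finite_toSet
      intro x hx
      exact Finset.mem_coe.mpr (Multiset.mem_toFinset.mpr ((Polynomial.mem_roots hne).mpr hx))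
    have hmeas : volume {x : ℝ | p.eval x * p.eval x ≠ 0}ᶜ = 0 := by
      have : {x : ℝ | p.eval x * p.eval x ≠ 0}ᶜ ⊆ {x : ℝ | p.eval x = 0} := by
        intro x hx
        simp only [Set.mem_compl_iff, Set.mem_setOf_eq, not_not] at hx
        exact mul_self_eq_zero.mp hx
      exact measure_mono_null this (hfin.measure_zero volume)
    -- but a.e. zero on Ioc 0 1 means Ioc 0 1 ⊆ roots up to null set, contradiction with measure 1
    have h1 : volume.restrict (Set.Ioc (0:ℝ) 1) {x : ℝ | p.eval x * p.eval x ≠ 0} = 0 := by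
      have := hae
      rw [Filter.EventuallyEq, MeasureTheory.ae_iff] at this
      simpa using this
    have h2 : volume.restrict (Set.Ioc (0:ℝ) 1) {x : ℝ | p.eval x * p.eval x ≠ 0}ᶜ = 0 := by
      exact le_antisymm ((MeasureTheory.Measure.restrict_apply_le _ _).trans hmeas.le) zero_le
    have h3 : volume.restrict (Set.Ioc (0:ℝ) 1) Set.univ = 0 := by
      have := measure_union_le (μ := volume.restrict (Set.Ioc (0:ℝ) 1))
        {x : ℝ | p.eval x * p.eval x ≠ 0} {x : ℝ | p.eval x * p.eval x ≠ 0}ᶜ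
      rw [Set.union_compl_self, h1, h2] at this
      simp only [add_zero, nonpos_iff_eq_zero] at this
      exact this
    rw [MeasureTheory.Measure.restrict_apply_univ] at h3
    simp [Real.volume_Ioc] at h3
  have hdeg0 : w₀.natDegree = 0 :=
    Polynomial.natDegree_eq_zero_of_derivative_eq_zero hp0
  exact ⟨w₀.coeff 0, Polynomial.eq_C_of_natDegree_le_zero (le_of_eq hdeg0)⟩
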